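/- arXiv:1007.2091 — 2 statements merged into one kernel-verified Lean document; each statement's English description precedes it below -/
import Mathlib

section
/- If f : Ω → ℝⁿ is continuous and monotone on an open set Ω ⊆ ℝⁿ (each component attains its supremum and infimum over any closed ball inside Ω on the boundary sphere of that ball), then for every ball B(x,r) with closure in Ω and every t ∈ (r, 2r) with B(x,2r) ⊆ Ω, one has diam f(B(x,r)) ≤ ∑_{i=1}^n osc_{S(x,t)} f_i, where S(x,t) is the sphere of radius t about x. -/
open Metric

theorem stmt_10 (n : ℕ) (Ω : Set (EuclideanSpace ℝ (Fin n))) (hΩ : IsOpen Ω)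
    (f : EuclideanSpace ℝ (Fin n) → EuclideanSpace ℝ (Fin n))
    (hf : ContinuousOn f Ω)
    (hmono : ∀ i : Fin n, ∀ z : EuclideanSpace ℝ (Fin n), ∀ R : ℝ, 0 < R →
      Metric.closedBall z R ⊆ Ω →
      sSup ((fun y => f y i) '' Metric.sphere z R) =
        sSup ((fun y => f y i) '' Metric.closedBall z R) ∧
      sInf ((fun y => f y i) '' Metric.sphere z R) =
        sInf ((fun y => f y i) '' Metric.closedBall z R))
    (x : EuclideanSpace ℝ (Fin n)) (r t : ℝ) (hr : 0 < r)
    (ht1 : r < t) (ht2 : t < 2 * r)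
    (hball : Metric.closedBall x (2 * r) ⊆ Ω) :
    Metric.diam (f '' Metric.ball x r) ≤
      ∑ i : Fin n, (sSup ((fun y => f y i) '' Metric.sphere x t) -
        sInf ((fun y => f y i) '' Metric.sphere x t)) := by
  rcases Nat.eq_zero_or_pos n with hn | hn
  · subst hn
    have : (f '' Metric.ball x r).Subsingleton := Set.subsingleton_of_subsingleton
    simp [Metric.diam_subsingleton this]
  -- n ≥ 1
  have : NeZero n := ⟨hn.ne'⟩
  have htpos : 0 < t := hr.trans ht1
  have hKΩ : Metric.closedBall x t ⊆ Ω :=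
    (Metric.closedBall_subset_closedBall ht2.le).trans hball
  have hSK : Metric.sphere x t ⊆ Metric.closedBall x t := Metric.sphere_subset_closedBall
  have hbK : Metric.ball x r ⊆ Metric.closedBall x t :=
    (Metric.ball_subset_ball ht1.le).trans Metric.ball_subset_closedBall
  have hKcpt : IsCompact (Metric.closedBall x t) := isCompact_closedBall x t
  have hSne : (Metric.sphere x t).Nonempty := NormedSpace.sphere_nonempty.2 htpos.le
  have hfi : ∀ i : Fin n, ContinuousOn (fun y => f y i) (Metric.closedBall x t) := by
    intro i
    exact ((continuous_apply i).comp_continuousOn ((PiLp.continuous_ofLp _ _).comp_continuousOn (hf.mono hKΩ)))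
  have himgcpt : ∀ i : Fin n, IsCompact ((fun y => f y i) '' Metric.closedBall x t) :=
    fun i => hKcpt.image_of_continuousOn (hfi i)
  have hbddA : ∀ i : Fin n, BddAbove ((fun y => f y i) '' Metric.closedBall x t) :=
    fun i => (himgcpt i).bddAbove
  have hbddB : ∀ i : Fin n, BddBelow ((fun y => f y i) '' Metric.closedBall x t) :=
    fun i => (himgcpt i).bddBelow
  have hmono' := fun i => hmono i x t htpos hKΩ
  -- bound per coordinate on the closed ball
  have hle : ∀ i : Fin n, ∀ u ∈ Metric.ball x r, ∀ v ∈ Metric.ball x r,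
      dist (f u i) (f v i) ≤ sSup ((fun y => f y i) '' Metric.sphere x t) -
        sInf ((fun y => f y i) '' Metric.sphere x t) := by
    intro i u hu v hv
    rw [(hmono' i).1, (hmono' i).2]
    have h1 : f u i ≤ sSup ((fun y => f y i) '' Metric.closedBall x t) :=
      le_csSup (hbddA i) ⟨u, hbK hu, rfl⟩
    have h2 : f v i ≤ sSup ((fun y => f y i) '' Metric.closedBall x t) :=
      le_csSup (hbddA i) ⟨v, hbK hv, rfl⟩
    have h3 : sInf ((fun y => f y i) '' Metric.closedBall x t) ≤ f u i :=
      csInf_le (hbddB i) ⟨u, hbK hu, rfl⟩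
    have h4 : sInf ((fun y => f y i) '' Metric.closedBall x t) ≤ f v i :=
      csInf_le (hbddB i) ⟨v, hbK hv, rfl⟩
    rw [Real.dist_eq, abs_sub_le_iff]
    constructor <;> linarith
  have hosc_nonneg : ∀ i : Fin n, 0 ≤ sSup ((fun y => f y i) '' Metric.sphere x t) -
      sInf ((fun y => f y i) '' Metric.sphere x t) := by
    intro i
    rw [(hmono' i).1, (hmono' i).2]
    have hne : ((fun y => f y i) '' Metric.closedBall x t).Nonempty :=
      (hSne.mono hSK).image _
    linarith [csInf_le_csSup hne (hbddB i) (hbddA i)]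
  apply Metric.diam_le_of_forall_dist_le (Finset.sum_nonneg (fun i _ => hosc_nonneg i))
  rintro _ ⟨u, hu, rfl⟩ _ ⟨v, hv, rfl⟩
  have hdist : dist (f u) (f v) ≤ ∑ i : Fin n, dist (f u i) (f v i) := by
    rw [EuclideanSpace.dist_eq]
    calc Real.sqrt (∑ i, dist (f u i) (f v i) ^ 2)
        ≤ Real.sqrt ((∑ i, dist (f u i) (f v i)) ^ 2) :=
          Real.sqrt_le_sqrt (Finset.sum_sq_le_sq_sum_of_nonneg (fun i _ => dist_nonneg))
      _ = ∑ i, dist (f u i) (f v i) :=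
          Real.sqrt_sq (Finset.sum_nonneg fun i _ => dist_nonneg)
  exact hdist.trans (Finset.sum_le_sum fun i _ => hle i u hu v hv)
end

section
/- Let Ω ⊆ ℝⁿ be a cube, p > 1, A : [0,∞) → [0,∞) increasing, and Φ(t) = A(t) t^p. Then there exists a constant C > 0 depending only on n and p such that for every nonnegative integrable h : Ω → [0,∞), ∫_Ω Φ(M_Ω h) ≤ C ∫_Ω Φ(C h), where M_Ω h(x) = sup { (1/|Q|) ∫_Q h : x ∈ Q ⊆ Ω, Q a subcube } is the local maximal operator. -/
open MeasureTheory

/-- The closed axis-parallel cube with center `c` and half-side `s`. -/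
def cube {n : ℕ} (c : EuclideanSpace ℝ (Fin n)) (s : ℝ) :
    Set (EuclideanSpace ℝ (Fin n)) :=
  {y | ∀ i, |y i - c i| ≤ s}

/-- The local maximal operator over subcubes of `Ω`. -/
noncomputable def maxOp {n : ℕ} (Ω : Set (EuclideanSpace ℝ (Fin n)))
    (h : EuclideanSpace ℝ (Fin n) → ENNReal) (x : EuclideanSpace ℝ (Fin n)) :
    ENNReal :=
  ⨆ (z : EuclideanSpace ℝ (Fin n)) (s : ℝ) (_ : 0 < s) (_ : x ∈ cube z s)
    (_ : cube z s ⊆ Ω), (∫⁻ y in cube z s, h y) / volume (cube z s)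

open Metric Set Pointwise



variable {n : ℕ}

lemma isClosed_cube (c : EuclideanSpace ℝ (Fin n)) (s : ℝ) : IsClosed (cube c s) := by
  have : cube c s = ⋂ i, {y : EuclideanSpace ℝ (Fin n) | |y i - c i| ≤ s} := by
    ext y; simp [cube, Set.mem_iInter]
  rw [this]
  refine isClosed_iInter fun i => ?_
  have hcont : Continuous fun y : EuclideanSpace ℝ (Fin n) => y i := by fun_prop
  exact isClosed_le ((hcont.sub continuous_const).abs) continuous_const

lemma measurableSet_cube (c : EuclideanSpace ℝ (Fin n)) (s : ℝ) : MeasurableSet (cube c s) :=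
  (isClosed_cube c s).measurableSet

lemma closedBall_subset_cube (c : EuclideanSpace ℝ (Fin n)) (s : ℝ) :
    closedBall c s ⊆ cube c s := by
  intro y hy i
  rw [mem_closedBall] at hy
  have h1 : dist (y i) (c i) ≤ dist y c := by
    rw [EuclideanSpace.dist_eq]
    have h2 : dist (y i) (c i) ^ 2 ≤ ∑ j, dist (y j) (c j) ^ 2 :=
      Finset.single_le_sum (f := fun j => dist (y j) (c j)^2)
        (fun j _ => sq_nonneg _) (Finset.mem_univ i)
    calc dist (y i) (c i) = Real.sqrt (dist (y i) (c i) ^ 2) :=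
          (Real.sqrt_sq dist_nonneg).symm
      _ ≤ _ := Real.sqrt_le_sqrt h2
  calc |y i - c i| = dist (y i) (c i) := (Real.dist_eq _ _).symm
    _ ≤ dist y c := h1
    _ ≤ s := hy

lemma cube_subset_closedBall (c : EuclideanSpace ℝ (Fin n)) {s : ℝ} (hs : 0 ≤ s) :
    cube c s ⊆ closedBall c (s * Real.sqrt n) := by
  intro y hy
  rw [mem_closedBall, EuclideanSpace.dist_eq]
  have h : ∑ i, dist (y i) (c i)^2 ≤ n * s^2 := by
    calc ∑ i, dist (y i) (c i)^2 ≤ ∑ _i : Fin n, s^2 := by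
          apply Finset.sum_le_sum
          intro i _
          have := hy i
          rw [Real.dist_eq]
          nlinarith [abs_nonneg (y i - c i), sq_abs (y i - c i)]
      _ = n * s^2 := by simp [Finset.sum_const]
  calc Real.sqrt (∑ i, dist (y i) (c i)^2) ≤ Real.sqrt (n * s^2) := Real.sqrt_le_sqrt h
    _ = s * Real.sqrt n := by
        rw [Real.sqrt_mul (Nat.cast_nonneg n), Real.sqrt_sq hs]; ring

lemma cube_eq_vadd_smul (c : EuclideanSpace ℝ (Fin n)) {s : ℝ} (hs : 0 < s) :
    cube c s = c +ᵥ (s • cube (0 : EuclideanSpace ℝ (Fin n)) 1) := by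
  ext y
  simp only [Set.mem_vadd_set, Set.mem_smul_set]
  constructor
  · intro hy
    refine ⟨s • (s⁻¹ • (y - c)), ⟨s⁻¹ • (y - c), fun i => ?_, rfl⟩, ?_⟩
    · simp only [PiLp.smul_apply, PiLp.sub_apply, smul_eq_mul, PiLp.zero_apply, sub_zero,
        abs_mul, abs_inv, abs_of_pos hs]
      rw [inv_mul_le_iff₀ hs, mul_one]
      exact hy i
    · rw [smul_smul, mul_inv_cancel₀ hs.ne', one_smul, vadd_eq_add]
      abel
  · rintro ⟨_, ⟨w, hw, rfl⟩, rfl⟩ i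
    have h := hw i
    simp only [PiLp.zero_apply, sub_zero] at h
    have : (c +ᵥ s • w) i - c i = s * w i := by
      simp only [vadd_eq_add, PiLp.add_apply, PiLp.smul_apply, smul_eq_mul]
      ring
    rw [this, abs_mul, abs_of_pos hs]
    calc s * |w i| ≤ s * 1 := by nlinarith
      _ = s := mul_one s

lemma volume_cube (c : EuclideanSpace ℝ (Fin n)) {s : ℝ} (hs : 0 < s) :
    volume (cube c s) = ENNReal.ofReal (s ^ n) * volume (cube (0 : EuclideanSpace ℝ (Fin n)) 1) := by
  rw [cube_eq_vadd_smul c hs, measure_vadd, Measure.addHaar_smul,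
    finrank_euclideanSpace_fin, abs_of_pos (pow_pos hs n)]

lemma volume_cube_pos (c : EuclideanSpace ℝ (Fin n)) {s : ℝ} (hs : 0 < s) :
    0 < volume (cube c s) :=
  (measure_closedBall_pos volume c hs).trans_le (measure_mono (closedBall_subset_cube c s))

lemma volume_cube_lt_top (c : EuclideanSpace ℝ (Fin n)) (s : ℝ) :
    volume (cube c s) < ⊤ := by
  rcases le_or_gt s 0 with hs | hs
  · refine lt_of_le_of_lt (measure_mono ?_) (measure_closedBall_lt_top (x := c) (r := 0))
    intro y hy
    have : y ∈ cube c 0 := fun i => (hy i).trans hs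
    simpa using cube_subset_closedBall c le_rfl this
  · exact lt_of_le_of_lt (measure_mono (cube_subset_closedBall c hs.le))
      measure_closedBall_lt_top


lemma lintegral_Ioo_rpow_mul {q : ℝ} (hq : -1 < q) {a b : ℝ} (ha : 0 ≤ a) (hab : a ≤ b) :
    ∫⁻ t in Ioo a b, ENNReal.ofReal ((q+1) * t^q) =
      ENNReal.ofReal (b^(q+1) - a^(q+1)) := by
  have hq1 : (0:ℝ) < q + 1 := by linarith
  have hint : IntervalIntegrable (fun t : ℝ => t ^ q) volume a b :=
    intervalIntegral.intervalIntegrable_rpow' hq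
  have hint2 : IntegrableOn (fun t : ℝ => (q+1) * t ^ q) (Ioo a b) volume := by
    rw [intervalIntegrable_iff_integrableOn_Ioc_of_le hab] at hint
    exact IntegrableOn.mono_set (hint.const_mul (q+1)) Ioo_subset_Ioc_self
  rw [← ofReal_integral_eq_lintegral_ofReal hint2]
  · congr 1
    rw [← integral_Ioc_eq_integral_Ioo]
    have : ∫ t in Ioc a b, (q+1) * t ^ q = ∫ t in a..b, (q+1) * t ^ q := by
      rw [intervalIntegral.integral_of_le hab]
    rw [this, intervalIntegral.integral_const_mul, integral_rpow (Or.inl hq)]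
    field_simp
  · filter_upwards [self_mem_ae_restrict measurableSet_Ioo] with t ht
    have ht0 : 0 < t := lt_of_le_of_lt ha ht.1
    have : (0:ℝ) ≤ t ^ q := Real.rpow_nonneg ht0.le q
    positivity

variable {n : ℕ}

noncomputable def Mb {n : ℕ} (f : EuclideanSpace ℝ (Fin n) → ENNReal)
    (x : EuclideanSpace ℝ (Fin n)) : ENNReal :=
  ⨆ (r : ℚ) (_ : 0 < r), (∫⁻ y in closedBall x (r:ℝ), f y) / volume (closedBall x (r:ℝ))

lemma measurable_Mb {f : EuclideanSpace ℝ (Fin n) → ENNReal} (hf : Measurable f) :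
    Measurable (Mb f) := by
  refine Measurable.iSup fun r => Measurable.iSup fun hr => Measurable.div ?_ ?_
  · -- x ↦ ∫⁻ y in closedBall x r, f y
    have : ∀ x : EuclideanSpace ℝ (Fin n), (∫⁻ y in closedBall x (r:ℝ), f y)
        = ∫⁻ y, ({p : (EuclideanSpace ℝ (Fin n)) × (EuclideanSpace ℝ (Fin n)) |
            dist p.2 p.1 ≤ (r:ℝ)}.indicator (fun p => f p.2)) (x, y) := by
      intro x
      rw [← lintegral_indicator measurableSet_closedBall]
      rfl
    simp_rw [this]
    apply Measurable.lintegral_prod_right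
    apply Measurable.indicator
    · exact hf.comp measurable_snd
    · exact isClosed_le (continuous_dist.comp (continuous_snd.prodMk continuous_fst)) continuous_const |>.measurableSet
  · have hr' : (0:ℝ) ≤ (r:ℝ) := by exact_mod_cast hr.le
    simp_rw [fun x : EuclideanSpace ℝ (Fin n) => Measure.addHaar_closedBall volume x hr']
    exact measurable_const

lemma Mb_mono {f g : EuclideanSpace ℝ (Fin n) → ENNReal} (h : ∀ y, f y ≤ g y) (x) :
    Mb f x ≤ Mb g x := by
  refine iSup_mono fun r => iSup_mono fun _ => ?_
  gcongr
  exact h _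

lemma Mb_add_le {f g : EuclideanSpace ℝ (Fin n) → ENNReal} (hf : Measurable f) (x) :
    Mb (fun y => f y + g y) x ≤ Mb f x + Mb g x := by
  refine iSup_le fun r => iSup_le fun hr => ?_
  rw [lintegral_add_left hf, ENNReal.add_div]
  exact add_le_add (le_iSup_of_le r (le_iSup_of_le hr le_rfl))
    (le_iSup_of_le r (le_iSup_of_le hr le_rfl))

lemma Mb_le_of_le {f : EuclideanSpace ℝ (Fin n) → ENNReal} {c : ENNReal}
    (h : ∀ y, f y ≤ c) (x) : Mb f x ≤ c := by
  refine iSup_le fun r => iSup_le fun hr => ?_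
  have hvol : volume (closedBall x (r:ℝ)) ≠ 0 :=
    (measure_closedBall_pos volume x (by exact_mod_cast hr)).ne'
  have hvolt : volume (closedBall x (r:ℝ)) ≠ ⊤ := measure_closedBall_lt_top.ne
  rw [ENNReal.div_le_iff hvol hvolt]
  calc ∫⁻ y in closedBall x (r:ℝ), f y ≤ ∫⁻ _y in closedBall x (r:ℝ), c := lintegral_mono h
    _ = c * volume (closedBall x (r:ℝ)) := by rw [setLIntegral_const]

noncomputable def Kn (n : ℕ) : ENNReal :=
  ENNReal.ofReal ((3*Real.sqrt n)^n) * volume (ball (0 : EuclideanSpace ℝ (Fin n)) 1) /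
    volume (cube (0 : EuclideanSpace ℝ (Fin n)) 1)

lemma Kn_ne_zero (hn : 0 < n) : Kn n ≠ 0 := by
  apply ENNReal.div_ne_zero.2
  constructor
  · apply mul_ne_zero
    · simp only [ne_eq, ENNReal.ofReal_eq_zero, not_le]
      positivity
    · exact (measure_ball_pos volume _ one_pos).ne'
  · exact (volume_cube_lt_top _ _).ne

lemma Kn_ne_top (n : ℕ) : Kn n ≠ ⊤ := by
  exact (ENNReal.div_lt_top (ENNReal.mul_ne_top ENNReal.ofReal_ne_top measure_ball_lt_top.ne)
    (volume_cube_pos (0 : EuclideanSpace ℝ (Fin n)) one_pos).ne').ne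

lemma maxOp_le_Kn_mul_Mb (hn : 0 < n) (Ω : Set (EuclideanSpace ℝ (Fin n)))
    (h : EuclideanSpace ℝ (Fin n) → ENNReal) (x : EuclideanSpace ℝ (Fin n)) :
    maxOp Ω h x ≤ Kn n * Mb (Ω.indicator h) x := by
  refine iSup_le fun z => iSup_le fun s => iSup_le fun hs => iSup_le fun hx => iSup_le fun hsub => ?_
  have hsn : 0 < Real.sqrt n := Real.sqrt_pos.2 (Nat.cast_pos.2 hn)
  obtain ⟨r, hr1, hr2⟩ := exists_rat_btwn (show 2*(s*Real.sqrt n) < 3*(s*Real.sqrt n) by nlinarith)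
  have hrpos : (0:ℝ) < (r:ℝ) := lt_trans (by positivity) hr1
  have hrposq : (0:ℚ) < r := by exact_mod_cast hrpos
  -- cube z s ⊆ closedBall x r
  have hzx : dist x z ≤ s * Real.sqrt n := cube_subset_closedBall z hs.le hx
  have hsub2 : cube z s ⊆ closedBall x (r:ℝ) := by
    intro y hy
    have hyz : dist y z ≤ s * Real.sqrt n := cube_subset_closedBall z hs.le hy
    have : dist y x ≤ dist y z + dist x z := dist_triangle_right y x z
    rw [mem_closedBall]
    calc dist y x ≤ dist y z + dist x z := this
      _ ≤ s * Real.sqrt n + s * Real.sqrt n := add_le_add hyz hzx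
      _ = 2*(s*Real.sqrt n) := by ring
      _ ≤ (r:ℝ) := hr1.le
  set vB := volume (closedBall x (r:ℝ)) with hvB
  set vC := volume (cube z s) with hvC
  have hvB0 : vB ≠ 0 := (measure_closedBall_pos volume x hrpos).ne'
  have hvBt : vB ≠ ⊤ := measure_closedBall_lt_top.ne
  have hvC0 : vC ≠ 0 := (volume_cube_pos z hs).ne'
  have hvCt : vC ≠ ⊤ := (volume_cube_lt_top z s).ne
  have hint : ∫⁻ y in cube z s, h y = ∫⁻ y in cube z s, Ω.indicator h y := by
    refine setLIntegral_congr_fun (measurableSet_cube z s) ?_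
    intro y hy
    rw [Set.indicator_of_mem (hsub hy)]
  have hIle : ∫⁻ y in cube z s, h y ≤ ∫⁻ y in closedBall x (r:ℝ), Ω.indicator h y := by
    rw [hint]
    exact lintegral_mono_set hsub2
  set I := ∫⁻ y in closedBall x (r:ℝ), Ω.indicator h y with hI
  have hdiv : I / vC = (I / vB) * (vB / vC) := by
    rw [div_eq_mul_inv, div_eq_mul_inv, div_eq_mul_inv, mul_assoc, ← mul_assoc vB⁻¹,
      ENNReal.inv_mul_cancel hvB0 hvBt, one_mul]
  have hMb : I / vB ≤ Mb (Ω.indicator h) x :=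
    le_iSup_of_le r (le_iSup_of_le hrposq le_rfl)
  have hratio : vB / vC ≤ Kn n := by
    have hvBle : vB ≤ ENNReal.ofReal (s^n) * (ENNReal.ofReal ((3*Real.sqrt n)^n) *
        volume (ball (0 : EuclideanSpace ℝ (Fin n)) 1)) := by
      rw [hvB, Measure.addHaar_closedBall volume x hrpos.le, finrank_euclideanSpace_fin,
        ← mul_assoc, ← ENNReal.ofReal_mul (by positivity)]
      apply mul_le_mul_left
      apply ENNReal.ofReal_le_ofReal
      calc (r:ℝ)^n ≤ (3*(s*Real.sqrt n))^n := by
            apply pow_le_pow_left₀ hrpos.le hr2.le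
        _ = s^n * (3*Real.sqrt n)^n := by rw [← mul_pow]; ring_nf
    have hvCeq : vC = ENNReal.ofReal (s^n) * volume (cube (0 : EuclideanSpace ℝ (Fin n)) 1) :=
      volume_cube z hs
    calc vB / vC ≤ (ENNReal.ofReal (s^n) * (ENNReal.ofReal ((3*Real.sqrt n)^n) *
          volume (ball (0 : EuclideanSpace ℝ (Fin n)) 1))) /
          (ENNReal.ofReal (s^n) * volume (cube (0 : EuclideanSpace ℝ (Fin n)) 1)) := by
          rw [hvCeq]
          exact ENNReal.div_le_div hvBle le_rfl
      _ = Kn n := by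
          rw [ENNReal.mul_div_mul_left _ _ (by simp [ENNReal.ofReal_eq_zero]; positivity)
            ENNReal.ofReal_ne_top]
          rfl
  calc (∫⁻ y in cube z s, h y) / vC ≤ I / vC := ENNReal.div_le_div hIle le_rfl
    _ = (I / vB) * (vB / vC) := hdiv
    _ ≤ Mb (Ω.indicator h) x * Kn n := mul_le_mul' hMb hratio
    _ = Kn n * Mb (Ω.indicator h) x := mul_comm _ _

lemma Mb_weak (hn : 0 < n) {f : EuclideanSpace ℝ (Fin n) → ENNReal}
    (hfin : ∫⁻ y, f y ≠ ⊤) {l : ENNReal} (hl0 : l ≠ 0) (hlt : l ≠ ⊤) :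
    volume {x | l < Mb f x} ≤ ENNReal.ofReal (4^n) / l * ∫⁻ y, f y := by
  classical
  set S := {x : EuclideanSpace ℝ (Fin n) | l < Mb f x} with hS
  set I := ∫⁻ y, f y with hIdef
  set κb := volume (ball (0 : EuclideanSpace ℝ (Fin n)) 1) with hκ
  have hκb0 : κb ≠ 0 := (measure_ball_pos volume _ one_pos).ne'
  have hκbt : κb ≠ ⊤ := measure_ball_lt_top.ne
  have key : ∀ x ∈ S, ∃ r : ℚ, 0 < r ∧
      l * volume (closedBall x (r:ℝ)) < ∫⁻ y in closedBall x (r:ℝ), f y := by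
    intro x hx
    rw [hS, Set.mem_setOf_eq, Mb, lt_iSup_iff] at hx
    obtain ⟨r, hx⟩ := hx
    rw [lt_iSup_iff] at hx
    obtain ⟨hr, hx⟩ := hx
    have hrpos : (0:ℝ) < (r:ℝ) := by exact_mod_cast hr
    refine ⟨r, hr, ?_⟩
    rwa [ENNReal.lt_div_iff_mul_lt (Or.inl (measure_closedBall_pos volume x hrpos).ne')
      (Or.inl measure_closedBall_lt_top.ne)] at hx
  choose! rq hrq0 hrqav using key
  -- uniform radius bound
  set β := I / (l * κb) with hβ
  have hβt : β ≠ ⊤ := (ENNReal.div_lt_top hfin (by simp [hl0, hκb0])).ne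
  have hbd : ∀ x ∈ S, (rq x : ℝ) ≤ max 1 β.toReal := by
    intro x hx
    have h1 : l * volume (closedBall x (rq x : ℝ)) ≤ I :=
      le_trans (hrqav x hx).le (lintegral_mono' Measure.restrict_le_self le_rfl)
    have hrpos : (0:ℝ) < (rq x : ℝ) := by exact_mod_cast hrq0 x hx
    rw [Measure.addHaar_closedBall volume x hrpos.le, finrank_euclideanSpace_fin] at h1
    have h2 : ENNReal.ofReal ((rq x : ℝ)^n) ≤ β := by
      rw [hβ, ENNReal.le_div_iff_mul_le (Or.inl (by simp [hl0, hκb0])) (Or.inl (by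
        exact ENNReal.mul_ne_top hlt hκbt))]
      calc ENNReal.ofReal ((rq x:ℝ)^n) * (l * κb)
          = l * (ENNReal.ofReal ((rq x:ℝ)^n) * κb) := by ring
        _ ≤ I := h1
    have h3 : ((rq x:ℝ))^n ≤ β.toReal := by
      rw [← ENNReal.ofReal_le_iff_le_toReal hβt] at *
      exact h2
    rcases le_or_gt ((rq x : ℝ)) 1 with h | h
    · exact le_max_of_le_left h
    · refine le_max_of_le_right (le_trans ?_ h3)
      exact le_self_pow₀ h.le hn.ne'
  obtain ⟨u, huS, hdisj, hcov⟩ :=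
    Vitali.exists_disjoint_subfamily_covering_enlargement_closedBall S id
      (fun x => (rq x : ℝ)) (max 1 β.toReal) hbd 4 (by norm_num)
  -- S is covered by the 4-fold enlargements
  have hScov : S ⊆ ⋃ b ∈ u, closedBall b (4 * (rq b : ℝ)) := by
    intro x hx
    obtain ⟨b, hb, hsub⟩ := hcov x hx
    refine Set.mem_biUnion hb (hsub ?_)
    simp only [id_eq]
    have : (0:ℝ) < (rq x : ℝ) := by exact_mod_cast hrq0 x hx
    exact mem_closedBall_self this.le
  -- u is countable
  have hpair : Pairwise (Function.onFun Disjoint fun b : u => closedBall (b : EuclideanSpace ℝ (Fin n)) ((rq b : ℝ))) := by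
    intro i j hij
    exact hdisj i.2 j.2 (fun hc => hij (Subtype.ext hc))
  have hcnt : u.Countable := by
    have hpos := MeasureTheory.Measure.countable_meas_pos_of_disjoint_iUnion
      (μ := volume) (As := fun b : u => closedBall (b : EuclideanSpace ℝ (Fin n)) ((rq b : ℝ)))
      (fun b => measurableSet_closedBall) hpair
    have : {i : u | 0 < volume (closedBall (i : EuclideanSpace ℝ (Fin n)) ((rq i : ℝ)))} = Set.univ := by
      refine Set.eq_univ_of_forall fun i => ?_
      exact measure_closedBall_pos volume _ (by exact_mod_cast hrq0 i (huS i.2))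
    rw [this] at hpos
    rw [← Set.countable_coe_iff]
    exact Set.countable_univ_iff.mp hpos
  haveI : Countable u := hcnt.to_subtype
  calc volume S ≤ volume (⋃ b ∈ u, closedBall b (4 * (rq b : ℝ))) := measure_mono hScov
    _ ≤ ∑' b : u, volume (closedBall (b : EuclideanSpace ℝ (Fin n)) (4 * (rq b : ℝ))) :=
        measure_biUnion_le volume hcnt _
    _ ≤ ∑' b : u, ENNReal.ofReal (4^n) * (l⁻¹ * ∫⁻ y in closedBall (b : EuclideanSpace ℝ (Fin n)) ((rq b : ℝ)), f y) := by
        refine ENNReal.tsum_le_tsum fun b => ?_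
        have hrpos : (0:ℝ) < (rq b : ℝ) := by exact_mod_cast hrq0 b (huS b.2)
        have hv4 : volume (closedBall (b : EuclideanSpace ℝ (Fin n)) (4 * (rq b : ℝ)))
            = ENNReal.ofReal (4^n) * volume (closedBall (b : EuclideanSpace ℝ (Fin n)) ((rq b : ℝ))) := by
          rw [Measure.addHaar_closedBall volume _ (by positivity : (0:ℝ) ≤ 4 * (rq b:ℝ)),
            Measure.addHaar_closedBall volume _ hrpos.le, finrank_euclideanSpace_fin,
            mul_pow, ENNReal.ofReal_mul (by positivity), mul_assoc]
        rw [hv4]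
        apply mul_le_mul_right
        have hle := (hrqav b (huS b.2)).le
        calc volume (closedBall (b : EuclideanSpace ℝ (Fin n)) ((rq b : ℝ)))
            = l⁻¹ * (l * volume (closedBall (b : EuclideanSpace ℝ (Fin n)) ((rq b : ℝ)))) := by
              rw [← mul_assoc, ENNReal.inv_mul_cancel hl0 hlt, one_mul]
          _ ≤ l⁻¹ * ∫⁻ y in closedBall (b : EuclideanSpace ℝ (Fin n)) ((rq b : ℝ)), f y :=
              mul_le_mul_right hle _
    _ = ENNReal.ofReal (4^n) * l⁻¹ * ∑' b : u, ∫⁻ y in closedBall (b : EuclideanSpace ℝ (Fin n)) ((rq b : ℝ)), f y := by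
        rw [← ENNReal.tsum_mul_left]
        congr 1
        ext b
        ring
    _ ≤ ENNReal.ofReal (4^n) * l⁻¹ * I := by
        apply mul_le_mul_right
        rw [← lintegral_iUnion (fun b : u => measurableSet_closedBall) hpair]
        exact lintegral_mono' Measure.restrict_le_self le_rfl
    _ = ENNReal.ofReal (4^n) / l * I := by rw [div_eq_mul_inv]

lemma Mb_top_null (hn : 0 < n) {f : EuclideanSpace ℝ (Fin n) → ENNReal}
    (hfin : ∫⁻ y, f y ≠ ⊤) : volume {x | Mb f x = ⊤} = 0 := by
  set J := ENNReal.ofReal (4^n) * ∫⁻ y, f y with hJ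
  have hJt : J ≠ ⊤ := ENNReal.mul_ne_top ENNReal.ofReal_ne_top hfin
  set T := {x : EuclideanSpace ℝ (Fin n) | Mb f x = ⊤} with hT
  have hbd : ∀ m : ℕ, volume T * (m+1 : ENNReal) ≤ J := by
    intro m
    have hsub : T ⊆ {x | ((m:ENNReal)+1) < Mb f x} := by
      intro x hx
      rw [hT, Set.mem_setOf_eq] at hx
      rw [Set.mem_setOf_eq, hx]
      exact lt_top_iff_ne_top.2 (by simp)
    have hm0 : ((m:ENNReal)+1) ≠ 0 := by simp
    have hmt : ((m:ENNReal)+1) ≠ ⊤ := by simp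
    calc volume T * ((m:ENNReal)+1)
        ≤ (ENNReal.ofReal (4^n) / ((m:ENNReal)+1) * ∫⁻ y, f y) * ((m:ENNReal)+1) :=
          mul_le_mul_left ((measure_mono hsub).trans (Mb_weak hn hfin hm0 hmt)) _
      _ = J * (((m:ENNReal)+1)⁻¹ * ((m:ENNReal)+1)) := by rw [div_eq_mul_inv, hJ]; ring
      _ = J := by rw [ENNReal.inv_mul_cancel hm0 hmt, mul_one]
  by_contra hne
  have hpos : 0 < volume T := pos_iff_ne_zero.2 hne
  obtain ⟨m, hm⟩ := ENNReal.exists_nat_gt (ENNReal.div_lt_top hJt hne).ne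
  have h1 : J < volume T * (m+1 : ENNReal) := by
    rcases eq_or_ne (volume T) ⊤ with htop | hfin2
    · rw [htop, ENNReal.top_mul (by simp : (m:ENNReal)+1 ≠ 0)]
      exact lt_top_iff_ne_top.2 hJt
    · have hm' : J < (m:ENNReal) * volume T := by
        calc J = (J / volume T) * volume T := (ENNReal.div_mul_cancel hne hfin2).symm
          _ < (m:ENNReal) * volume T :=
            ENNReal.mul_lt_mul_left hne hfin2 hm
      calc J < (m:ENNReal) * volume T := hm'
        _ ≤ ((m:ENNReal)+1) * volume T := by gcongr; exact le_self_add
        _ = volume T * ((m:ENNReal)+1) := mul_comm _ _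
  exact absurd (hbd m) (not_le.2 h1)


lemma phi_le_layercake {A : ENNReal → ENNReal} (hA : Monotone A) {p : ℝ} (hp : 1 < p)
    {u : ENNReal} (hut : u ≠ ⊤) :
    A u * u ^ p ≤ ∫⁻ t in Ioi (0:ℝ),
      (if ENNReal.ofReal t < 2 * u then A (ENNReal.ofReal t) * ENNReal.ofReal (p * t^(p-1)) else 0) := by
  rcases eq_or_ne u 0 with rfl | hu0
  · rw [ENNReal.zero_rpow_of_pos (by linarith), mul_zero]
    exact zero_le
  set a := u.toReal with ha
  have ha0 : 0 < a := ENNReal.toReal_pos hu0 hut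
  have hua : u = ENNReal.ofReal a := (ENNReal.ofReal_toReal hut).symm
  have hsub : Ioo a (2*a) ⊆ Ioi (0:ℝ) := fun t ht => lt_trans ha0 ht.1
  have step1 : ∫⁻ t in Ioo a (2*a), A u * ENNReal.ofReal (p * t^(p-1)) ≤
      ∫⁻ t in Ioi (0:ℝ),
      (if ENNReal.ofReal t < 2 * u then A (ENNReal.ofReal t) * ENNReal.ofReal (p * t^(p-1)) else 0) := by
    refine le_trans ?_ (lintegral_mono_set hsub)
    refine setLIntegral_mono_ae ?_ ?_
    · apply Measurable.aemeasurable
      apply Measurable.ite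
      · have : Measurable fun t : ℝ => ENNReal.ofReal t := ENNReal.measurable_ofReal.comp measurable_id
        exact measurableSet_lt this measurable_const
      · exact ((hA.measurable).comp ENNReal.measurable_ofReal).mul
          (ENNReal.measurable_ofReal.comp (measurable_const.mul (measurable_id.pow_const _)))
      · exact measurable_const
    · refine Filter.Eventually.of_forall fun t ht => ?_
      have h1 : ENNReal.ofReal t < 2 * u := by
        rw [hua, ← ENNReal.ofReal_ofNat, ← ENNReal.ofReal_mul (by norm_num)]
        exact ENNReal.ofReal_lt_ofReal_iff_of_nonneg (le_trans ha0.le ht.1.le) |>.2 ht.2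
      rw [if_pos h1]
      apply mul_le_mul_left
      apply hA
      rw [hua]
      exact ENNReal.ofReal_le_ofReal ht.1.le
  refine le_trans ?_ step1
  have hmeas : Measurable fun t : ℝ => ENNReal.ofReal (p * t^(p-1)) :=
    ENNReal.measurable_ofReal.comp (measurable_const.mul (measurable_id.pow_const _))
  rw [lintegral_const_mul _ hmeas]
  have hval : ∫⁻ t in Ioo a (2*a), ENNReal.ofReal (p * t^(p-1)) =
      ENNReal.ofReal ((2*a)^p - a^p) := by
    have := lintegral_Ioo_rpow_mul (q := p - 1) (by linarith) ha0.le (by linarith : a ≤ 2*a)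
    simpa [sub_add_cancel] using this
  rw [hval]
  apply mul_le_mul_right
  rw [hua, ENNReal.ofReal_rpow_of_pos ha0]
  apply ENNReal.ofReal_le_ofReal
  have h2p : (2:ℝ)^p ≥ 2 := by
    calc (2:ℝ)^p ≥ 2^(1:ℝ) := Real.rpow_le_rpow_left_iff (by norm_num) |>.2 hp.le
      _ = 2 := Real.rpow_one 2
  have : (2*a)^p = 2^p * a^p := Real.mul_rpow (by norm_num) ha0.le
  nlinarith [Real.rpow_nonneg ha0.le p]

lemma layercake_inner_le {A : ENNReal → ENNReal} (hA : Monotone A) {p : ℝ} (hp : 1 < p)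
    {T : ENNReal} (hT : T ≠ ⊤) :
    ∫⁻ t in Ioi (0:ℝ),
      (if ENNReal.ofReal t < T then A (ENNReal.ofReal t) * ENNReal.ofReal (p * t^(p-2)) else 0)
      ≤ A T * (ENNReal.ofReal (p/(p-1)) * T^(p-1)) := by
  set b := T.toReal with hb
  have hb0 : 0 ≤ b := ENNReal.toReal_nonneg
  have hmeas : Measurable fun t : ℝ => ENNReal.ofReal (p * t^(p-2)) :=
    ENNReal.measurable_ofReal.comp (measurable_const.mul (measurable_id.pow_const _))
  have hfun : ∀ t ∈ Ioi (0:ℝ),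
      (if ENNReal.ofReal t < T then A (ENNReal.ofReal t) * ENNReal.ofReal (p * t^(p-2)) else 0)
      = (Ioo (0:ℝ) b).indicator
          (fun t => A (ENNReal.ofReal t) * ENNReal.ofReal (p * t^(p-2))) t := by
    intro t ht
    by_cases hlt : ENNReal.ofReal t < T
    · rw [if_pos hlt, Set.indicator_of_mem]
      exact ⟨ht, (ENNReal.ofReal_lt_iff_lt_toReal (le_of_lt ht) hT).1 hlt⟩
    · rw [if_neg hlt, Set.indicator_of_notMem]
      intro hmem
      exact hlt ((ENNReal.ofReal_lt_iff_lt_toReal (le_of_lt ht) hT).2 hmem.2)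
  have hre : ∫⁻ t in Ioi (0:ℝ),
      (if ENNReal.ofReal t < T then A (ENNReal.ofReal t) * ENNReal.ofReal (p * t^(p-2)) else 0)
      = ∫⁻ t in Ioo (0:ℝ) b, A (ENNReal.ofReal t) * ENNReal.ofReal (p * t^(p-2)) := by
    rw [setLIntegral_congr_fun measurableSet_Ioi hfun,
      lintegral_indicator measurableSet_Ioo, Measure.restrict_restrict measurableSet_Ioo,
      Set.inter_eq_left.2 (fun t ht => ht.1)]
  rw [hre]
  have hstep : ∫⁻ t in Ioo (0:ℝ) b, A (ENNReal.ofReal t) * ENNReal.ofReal (p * t^(p-2))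
      ≤ ∫⁻ t in Ioo (0:ℝ) b, A T * ENNReal.ofReal (p * t^(p-2)) := by
    refine setLIntegral_mono_ae ((measurable_const.mul hmeas).aemeasurable) ?_
    refine Filter.Eventually.of_forall fun t ht => ?_
    apply mul_le_mul_left
    apply hA
    calc ENNReal.ofReal t ≤ ENNReal.ofReal b := ENNReal.ofReal_le_ofReal ht.2.le
      _ = T := ENNReal.ofReal_toReal hT
  refine hstep.trans ?_
  rw [lintegral_const_mul _ hmeas]
  apply mul_le_mul_right
  have hval : ∫⁻ t in Ioo (0:ℝ) b, ENNReal.ofReal (p * t^(p-2))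
      = ENNReal.ofReal (p/(p-1)) * ENNReal.ofReal (b^(p-1)) := by
    have hp1 : p - 1 ≠ 0 := by linarith
    have h1 : ∀ t : ℝ, p * t^(p-2) = (p/(p-1)) * ((p-1) * t^(p-2)) := by
      intro t; field_simp
    simp_rw [h1, ENNReal.ofReal_mul (div_nonneg (by linarith) (by linarith) : (0:ℝ) ≤ p/(p-1))]
    rw [lintegral_const_mul' _ _ ENNReal.ofReal_ne_top]
    congr 1
    have := lintegral_Ioo_rpow_mul (q := p - 2) (by linarith) le_rfl hb0
    have h2 : p - 2 + 1 = p - 1 := by ring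
    rw [h2] at this
    rw [this]
    congr 1
    rw [Real.zero_rpow (by linarith : p - 1 ≠ 0), sub_zero]
  rw [hval]
  apply mul_le_mul_right
  rcases eq_or_lt_of_le hb0 with hbe | hbp
  · rw [← hbe, Real.zero_rpow (by linarith : p-1 ≠ 0), ENNReal.ofReal_zero]
    exact zero_le
  · rw [← ENNReal.ofReal_rpow_of_pos hbp, ENNReal.ofReal_toReal hT]

theorem stmt_12 (n : ℕ) (hn : 0 < n) (p : ℝ) (hp : 1 < p) :
    ∃ C : ENNReal, 0 < C ∧ C ≠ ⊤ ∧
      ∀ (c : EuclideanSpace ℝ (Fin n)) (R : ℝ), 0 < R →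
      ∀ A : ENNReal → ENNReal, Monotone A →
      ∀ h : EuclideanSpace ℝ (Fin n) → ENNReal, Measurable h →
        (∫⁻ x in cube c R, h x) ≠ ⊤ →
        ∫⁻ x in cube c R, A (maxOp (cube c R) h x) * (maxOp (cube c R) h x) ^ p ≤
          C * ∫⁻ x in cube c R, A (C * h x) * (C * h x) ^ p := by
  classical
  set K := Kn n with hK
  have hK0 : K ≠ 0 := Kn_ne_zero hn
  have hKt : K ≠ ⊤ := Kn_ne_top n
  set L : ENNReal := 2 * K with hL
  have hL0 : L ≠ 0 := mul_ne_zero (by norm_num) hK0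
  have hLt : L ≠ ⊤ := ENNReal.mul_ne_top (by norm_num) hKt
  set D : ENNReal := 2 * L with hD
  have hD0 : D ≠ 0 := mul_ne_zero (by norm_num) hL0
  have hDt : D ≠ ⊤ := ENNReal.mul_ne_top (by norm_num) hLt
  set Kv : ENNReal := ENNReal.ofReal (4^n) with hKv
  have hKvt : Kv ≠ ⊤ := ENNReal.ofReal_ne_top
  set Cp : ENNReal := ENNReal.ofReal (p/(p-1)) with hCp
  have hCpt : Cp ≠ ⊤ := ENNReal.ofReal_ne_top
  refine ⟨1 + D + Kv * D * Cp, ?_, ?_, ?_⟩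
  · exact lt_of_lt_of_le one_pos (le_add_of_le_of_nonneg (le_add_of_le_of_nonneg le_rfl (zero_le)) (zero_le))
  · refine ENNReal.add_ne_top.2 ⟨ENNReal.add_ne_top.2 ⟨by norm_num, hDt⟩, ?_⟩
    exact ENNReal.mul_ne_top (ENNReal.mul_ne_top hKvt hDt) hCpt
  set C : ENNReal := 1 + D + Kv * D * Cp with hC
  have hC1 : (1:ENNReal) ≤ C := by rw [hC]; exact le_add_of_le_of_nonneg (le_add_of_le_of_nonneg le_rfl (zero_le)) (zero_le)
  have hCD : D ≤ C := by rw [hC]; calc D ≤ 1 + D := le_add_self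
                                      _ ≤ 1 + D + Kv*D*Cp := le_add_of_le_of_nonneg le_rfl (zero_le)
  have hCm : Kv * D * Cp ≤ C := by rw [hC]; exact le_add_self
  intro c R hR A hA h hh hint
  set Ω := cube c R with hΩ
  have hΩm : MeasurableSet Ω := measurableSet_cube c R
  set h' : EuclideanSpace ℝ (Fin n) → ENNReal := Ω.indicator h with hh'
  have hh'm : Measurable h' := hh.indicator hΩm
  have hfin : ∫⁻ y, h' y ≠ ⊤ := by
    rw [hh', lintegral_indicator hΩm]
    exact hint
  set W := Mb h' with hW
  have hWm : Measurable W := measurable_Mb hh'm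
  have hnull : volume {x | W x = ⊤} = 0 := Mb_top_null hn hfin
  have hae : ∀ᵐ x ∂volume, W x ≠ ⊤ := by
    rw [ae_iff]
    simpa [not_not] using hnull
  have hp0 : (0:ℝ) ≤ p := by linarith
  have hp1 : (0:ℝ) ≤ p - 1 := by linarith
  -- Step 1: replace maxOp by K * W
  have step1 : ∫⁻ x in Ω, A (maxOp Ω h x) * (maxOp Ω h x) ^ p ≤
      ∫⁻ x in Ω, A (K * W x) * (K * W x) ^ p := by
    refine lintegral_mono fun x => ?_
    have hle : maxOp Ω h x ≤ K * W x := maxOp_le_Kn_mul_Mb hn Ω h x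
    exact mul_le_mul' (hA hle) (ENNReal.rpow_le_rpow hle hp0)
  -- Step 2: layer cake upper
  have step2 : ∫⁻ x in Ω, A (K * W x) * (K * W x) ^ p ≤
      ∫⁻ x in Ω, ∫⁻ t in Ioi (0:ℝ),
        (if ENNReal.ofReal t < L * W x then A (ENNReal.ofReal t) * ENNReal.ofReal (p * t^(p-1)) else 0) := by
    refine lintegral_mono_ae (ae_restrict_of_ae ?_)
    filter_upwards [hae] with x hx
    have hKW : K * W x ≠ ⊤ := ENNReal.mul_ne_top hKt hx
    have := phi_le_layercake hA hp hKW
    convert this using 4 with t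
    rw [hL, mul_assoc]
  -- measurability for swap 1
  have hmeasA : Measurable A := hA.measurable
  have he1 : Measurable (Function.uncurry fun (x : EuclideanSpace ℝ (Fin n)) (t : ℝ) =>
      (if ENNReal.ofReal t < L * W x then A (ENNReal.ofReal t) * ENNReal.ofReal (p * t^(p-1)) else 0)) := by
    apply Measurable.ite
    · exact measurableSet_lt (ENNReal.measurable_ofReal.comp measurable_snd)
        (measurable_const.mul (hWm.comp measurable_fst))
    · exact (hmeasA.comp (ENNReal.measurable_ofReal.comp measurable_snd)).mul
        (ENNReal.measurable_ofReal.comp (measurable_const.mul (measurable_snd.pow_const _)))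
    · exact measurable_const
  have swap1 : ∫⁻ x in Ω, ∫⁻ t in Ioi (0:ℝ),
        (if ENNReal.ofReal t < L * W x then A (ENNReal.ofReal t) * ENNReal.ofReal (p * t^(p-1)) else 0)
      = ∫⁻ t in Ioi (0:ℝ), ∫⁻ x in Ω,
        (if ENNReal.ofReal t < L * W x then A (ENNReal.ofReal t) * ENNReal.ofReal (p * t^(p-1)) else 0) :=
    lintegral_lintegral_swap he1.aemeasurable
  -- Step 3: per-t weak type bound
  have step3 : ∀ t ∈ Ioi (0:ℝ), (∫⁻ x in Ω,
        (if ENNReal.ofReal t < L * W x then A (ENNReal.ofReal t) * ENNReal.ofReal (p * t^(p-1)) else 0))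
      ≤ Kv * D * ∫⁻ y, (if ENNReal.ofReal t < D * h' y then
          A (ENNReal.ofReal t) * ENNReal.ofReal (p * t^(p-2)) * h' y else 0) := by
    intro t ht
    rw [mem_Ioi] at ht
    set τ := ENNReal.ofReal t with hτ
    have hτ0 : τ ≠ 0 := by simp [hτ, ENNReal.ofReal_eq_zero, not_le, ht]
    have hτt : τ ≠ ⊤ := ENNReal.ofReal_ne_top
    have hccval : τ / L / 2 = τ / D := by
      rw [hD, mul_comm 2 L, div_eq_mul_inv, div_eq_mul_inv, div_eq_mul_inv,
        ENNReal.mul_inv (Or.inl hL0) (Or.inl hLt), mul_assoc]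
    set cc := τ / D with hcc
    have hcc0 : cc ≠ 0 := ENNReal.div_ne_zero.2 ⟨hτ0, hDt⟩
    have hcct : cc ≠ ⊤ := (ENNReal.div_lt_top hτt hD0).ne
    set lam := τ / L with hlam
    have hlam0 : lam ≠ 0 := ENNReal.div_ne_zero.2 ⟨hτ0, hLt⟩
    have hlamt : lam ≠ ⊤ := (ENNReal.div_lt_top hτt hL0).ne
    have hlam2 : lam / 2 = cc := by rw [hlam, hcc, hccval]
    set f2 : EuclideanSpace ℝ (Fin n) → ENNReal := fun y => if cc < h' y then h' y else 0 with hf2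
    have hf2m : Measurable f2 :=
      Measurable.ite (measurableSet_lt measurable_const hh'm) hh'm measurable_const
    have hf2le : ∀ y, f2 y ≤ h' y := by
      intro y; rw [hf2]; by_cases hy : cc < h' y <;> simp [hy]
    have hf2fin : ∫⁻ y, f2 y ≠ ⊤ := ne_top_of_le_ne_top hfin (lintegral_mono hf2le)
    -- inclusion
    have hsub1 : {x | τ < L * W x} ⊆ {x | cc < Mb f2 x} := by
      intro x hx
      rw [Set.mem_setOf_eq] at hx
      rw [Set.mem_setOf_eq]
      by_contra hcon
      push_neg at hcon
      have hWle : W x ≤ lam := by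
        have hmin : ∀ y, h' y ≤ (fun y => min (h' y) cc) y + f2 y := by
          intro y
          rw [hf2]
          by_cases hy : cc < h' y
          · simp only [hy, if_pos]
            exact le_add_self
          · simp only [hy, if_neg, not_false_iff, add_zero]
            exact le_min le_rfl (not_lt.1 hy)
        calc W x ≤ Mb (fun y => (fun y => min (h' y) cc) y + f2 y) x := Mb_mono hmin x
          _ ≤ Mb (fun y => min (h' y) cc) x + Mb f2 x :=
              Mb_add_le (hh'm.min measurable_const) x
          _ ≤ cc + cc := add_le_add (Mb_le_of_le (fun y => min_le_right _ _) x) hcon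
          _ = lam := by rw [← hlam2, ENNReal.add_halves]
      have hLW : L * W x ≤ τ := by
        calc L * W x ≤ L * lam := mul_le_mul_right hWle L
          _ = τ := by rw [hlam, mul_comm]; exact ENNReal.div_mul_cancel hL0 hLt
      exact absurd hx (not_lt.2 hLW)
    have hweak : volume {x | cc < Mb f2 x} ≤ Kv / cc * ∫⁻ y, f2 y :=
      Mb_weak hn hf2fin hcc0 hcct
    have hSm : MeasurableSet {x | τ < L * W x} :=
      measurableSet_lt measurable_const (measurable_const.mul hWm)
    set X1 := ENNReal.ofReal (p * t^(p-1)) with hX1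
    set X2 := ENNReal.ofReal (p * t^(p-2)) with hX2
    have hX1X2 : X1 = X2 * τ := by
      rw [hX1, hX2, hτ, ← ENNReal.ofReal_mul (by positivity)]
      congr 1
      rw [mul_assoc]
      congr 1
      rw [show p - 1 = (p-2)+1 by ring, Real.rpow_add ht, Real.rpow_one]
    have hX2t : X2 ≠ ⊤ := ENNReal.ofReal_ne_top
    have hLHS : (∫⁻ x in Ω, (if τ < L * W x then A τ * X1 else 0))
        = A τ * X1 * volume ({x | τ < L * W x} ∩ Ω) := by
      have hrw : ∀ x, (if τ < L * W x then A τ * X1 else 0)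
          = {x | τ < L * W x}.indicator (fun _ => A τ * X1) x := by
        intro x
        by_cases hx : τ < L * W x
        · rw [if_pos hx, Set.indicator_of_mem (show x ∈ {x | τ < L * W x} from hx)]
        · rw [if_neg hx, Set.indicator_of_notMem (show x ∉ {x | τ < L * W x} from hx)]
      simp_rw [hrw]
      rw [lintegral_indicator hSm, Measure.restrict_restrict hSm, setLIntegral_const]
    rw [hLHS]
    have hmeas2 : volume ({x | τ < L * W x} ∩ Ω) ≤ Kv / cc * ∫⁻ y, f2 y :=
      le_trans (measure_mono (Set.inter_subset_left.trans hsub1)) hweak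
    calc A τ * X1 * volume ({x | τ < L * W x} ∩ Ω)
        ≤ A τ * X1 * (Kv / cc * ∫⁻ y, f2 y) := mul_le_mul_right hmeas2 _
      _ = Kv * D * (A τ * X2 * ∫⁻ y, f2 y) := by
          have hKvcc : Kv / cc = Kv * D / τ := by
            rw [hcc, div_eq_mul_inv, ENNReal.inv_div (Or.inl hDt) (Or.inl hD0)]
            simp only [hD, hL, mul_div_assoc]
          rw [hKvcc, hX1X2]
          have hcancel : τ * (Kv * D / τ) = Kv * D := ENNReal.mul_div_cancel hτ0 hτt
          calc A τ * (X2 * τ) * (Kv * D / τ * ∫⁻ y, f2 y)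
              = A τ * X2 * (∫⁻ y, f2 y) * (τ * (Kv * D / τ)) := by ring
            _ = A τ * X2 * (∫⁻ y, f2 y) * (Kv * D) := by rw [hcancel]
            _ = Kv * D * (A τ * X2 * ∫⁻ y, f2 y) := by ring
      _ = Kv * D * ∫⁻ y, (if τ < D * h' y then A τ * X2 * h' y else 0) := by
          congr 1
          rw [← lintegral_const_mul (A τ * X2) hf2m]
          congr 1
          ext y
          simp only [hf2]
          have hcond : (cc < h' y) ↔ (τ < D * h' y) := by
            rw [hcc]
            exact Iff.trans (ENNReal.div_lt_iff (Or.inl hD0) (Or.inl hDt)) (by rw [mul_comm])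
          by_cases hy : cc < h' y
          · rw [if_pos hy, if_pos (hcond.1 hy)]
          · rw [if_neg hy, if_neg (fun hcon => hy (hcond.2 hcon)), mul_zero]
  -- Step 4: integrate step3 in t
  have hKvDt : Kv * D ≠ ⊤ := ENNReal.mul_ne_top hKvt hDt
  have step4 : (∫⁻ t in Ioi (0:ℝ), ∫⁻ x in Ω,
        (if ENNReal.ofReal t < L * W x then A (ENNReal.ofReal t) * ENNReal.ofReal (p * t^(p-1)) else 0))
      ≤ Kv * D * ∫⁻ t in Ioi (0:ℝ), ∫⁻ y, (if ENNReal.ofReal t < D * h' y then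
          A (ENNReal.ofReal t) * ENNReal.ofReal (p * t^(p-2)) * h' y else 0) := by
    rw [← lintegral_const_mul' (Kv * D) _ hKvDt]
    refine lintegral_mono_ae ((ae_restrict_iff' measurableSet_Ioi).2
      (Filter.Eventually.of_forall step3))
  -- Step 5: swap again
  have he2m : Measurable (Function.uncurry fun (t : ℝ) (y : EuclideanSpace ℝ (Fin n)) =>
      (if ENNReal.ofReal t < D * h' y then
          A (ENNReal.ofReal t) * ENNReal.ofReal (p * t^(p-2)) * h' y else 0)) := by
    apply Measurable.ite
    · exact measurableSet_lt (ENNReal.measurable_ofReal.comp measurable_fst)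
        (measurable_const.mul (hh'm.comp measurable_snd))
    · exact ((hmeasA.comp (ENNReal.measurable_ofReal.comp measurable_fst)).mul
        (ENNReal.measurable_ofReal.comp (measurable_const.mul (measurable_fst.pow_const _)))).mul
        (hh'm.comp measurable_snd)
    · exact measurable_const
  have swap2 : (∫⁻ t in Ioi (0:ℝ), ∫⁻ y, (if ENNReal.ofReal t < D * h' y then
          A (ENNReal.ofReal t) * ENNReal.ofReal (p * t^(p-2)) * h' y else 0))
      = ∫⁻ y, ∫⁻ t in Ioi (0:ℝ), (if ENNReal.ofReal t < D * h' y then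
          A (ENNReal.ofReal t) * ENNReal.ofReal (p * t^(p-2)) * h' y else 0) :=
    lintegral_lintegral_swap he2m.aemeasurable
  -- Step 6: inner bound a.e. in y
  have haefin : ∀ᵐ y ∂(volume : Measure (EuclideanSpace ℝ (Fin n))), h' y ≠ ⊤ :=
    (ae_lt_top hh'm hfin).mono fun y hy => hy.ne
  have step5 : (∫⁻ y, ∫⁻ t in Ioi (0:ℝ), (if ENNReal.ofReal t < D * h' y then
          A (ENNReal.ofReal t) * ENNReal.ofReal (p * t^(p-2)) * h' y else 0))
      ≤ ∫⁻ y, Cp * (A (C * h' y) * (C * h' y)^p) := by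
    refine lintegral_mono_ae ?_
    filter_upwards [haefin] with y hy
    have hrw : ∀ t : ℝ, (if ENNReal.ofReal t < D * h' y then
          A (ENNReal.ofReal t) * ENNReal.ofReal (p * t^(p-2)) * h' y else 0)
        = (if ENNReal.ofReal t < D * h' y then
          A (ENNReal.ofReal t) * ENNReal.ofReal (p * t^(p-2)) else 0) * h' y := by
      intro t
      by_cases hcase : ENNReal.ofReal t < D * h' y
      · rw [if_pos hcase, if_pos hcase]
      · rw [if_neg hcase, if_neg hcase, zero_mul]
    simp_rw [hrw]
    rw [lintegral_mul_const' (h' y) _ hy]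
    have hT : D * h' y ≠ ⊤ := ENNReal.mul_ne_top hDt hy
    have hinner := layercake_inner_le hA hp (T := D * h' y) hT
    have h1 : A (D * h' y) ≤ A (C * h' y) := hA (mul_le_mul_left hCD _)
    have h2 : (D * h' y)^(p-1) * h' y ≤ (C * h' y)^p := by
      calc (D * h' y)^(p-1) * h' y ≤ (C * h' y)^(p-1) * (C * h' y) := by
            apply mul_le_mul'
            · exact ENNReal.rpow_le_rpow (mul_le_mul_left hCD _) hp1
            · calc h' y = 1 * h' y := (one_mul _).symm
                _ ≤ C * h' y := mul_le_mul_left hC1 _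
        _ = (C * h' y)^(p-1) * (C * h' y)^(1:ℝ) := by rw [ENNReal.rpow_one]
        _ = (C * h' y)^(p-1+1) := (ENNReal.rpow_add_of_nonneg _ _ hp1 zero_le_one).symm
        _ = (C * h' y)^p := by norm_num
    calc (∫⁻ t in Ioi (0:ℝ), (if ENNReal.ofReal t < D * h' y then
            A (ENNReal.ofReal t) * ENNReal.ofReal (p * t^(p-2)) else 0)) * h' y
        ≤ (A (D * h' y) * (Cp * (D * h' y)^(p-1))) * h' y := mul_le_mul_left hinner _
      _ = Cp * (A (D * h' y) * ((D * h' y)^(p-1) * h' y)) := by ring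
      _ ≤ Cp * (A (C * h' y) * (C * h' y)^p) := mul_le_mul_right (mul_le_mul' h1 h2) _
  have step6 : (∫⁻ y, Cp * (A (C * h' y) * (C * h' y)^p))
      = Cp * ∫⁻ y, A (C * h' y) * (C * h' y)^p := lintegral_const_mul' _ _ hCpt
  have step7 : (∫⁻ y, A (C * h' y) * (C * h' y)^p)
      = ∫⁻ x in Ω, A (C * h x) * (C * h x)^p := by
    rw [← lintegral_indicator hΩm]
    congr 1
    ext y
    by_cases hy : y ∈ Ω
    · rw [Set.indicator_of_mem hy, hh', Set.indicator_of_mem hy]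
    · rw [Set.indicator_of_notMem hy, hh', Set.indicator_of_notMem hy, mul_zero,
        ENNReal.zero_rpow_of_pos (by linarith), mul_zero]
  calc ∫⁻ x in Ω, A (maxOp Ω h x) * (maxOp Ω h x) ^ p
      ≤ ∫⁻ x in Ω, A (K * W x) * (K * W x) ^ p := step1
    _ ≤ ∫⁻ x in Ω, ∫⁻ t in Ioi (0:ℝ),
        (if ENNReal.ofReal t < L * W x then A (ENNReal.ofReal t) * ENNReal.ofReal (p * t^(p-1)) else 0) := step2
    _ = ∫⁻ t in Ioi (0:ℝ), ∫⁻ x in Ω,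
        (if ENNReal.ofReal t < L * W x then A (ENNReal.ofReal t) * ENNReal.ofReal (p * t^(p-1)) else 0) := swap1
    _ ≤ Kv * D * ∫⁻ t in Ioi (0:ℝ), ∫⁻ y, (if ENNReal.ofReal t < D * h' y then
          A (ENNReal.ofReal t) * ENNReal.ofReal (p * t^(p-2)) * h' y else 0) := step4
    _ = Kv * D * ∫⁻ y, ∫⁻ t in Ioi (0:ℝ), (if ENNReal.ofReal t < D * h' y then
          A (ENNReal.ofReal t) * ENNReal.ofReal (p * t^(p-2)) * h' y else 0) := by rw [swap2]
    _ ≤ Kv * D * ∫⁻ y, Cp * (A (C * h' y) * (C * h' y)^p) := mul_le_mul_right step5 _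
    _ = Kv * D * Cp * ∫⁻ x in Ω, A (C * h x) * (C * h x)^p := by
        rw [step6, step7, ← mul_assoc]
    _ ≤ C * ∫⁻ x in Ω, A (C * h x) * (C * h x)^p := mul_le_mul_left hCm _
end
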